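/- arXiv:1908.11677 — 2 statements merged into one kernel-verified Lean document; each statement's English description precedes it below -/
import Mathlib

section
/- For an arclength-parametrized closed curve f with unit tangent τ = f', the identity ‖f(s₁) - f(s₂)‖² = (s₁ - s₂)² - ∫_{s₂}^{s₁}∫_{s₂}^{s₁} (1/2)‖τ(s₃) - τ(s₄)‖² ds₃ ds₄ holds, i.e., (s₁-s₂)² - ‖Δf‖² = (1/2)∫∫ ‖Δτ‖². -/
open Real intervalIntegral MeasureTheory

theorem chord_length_identity {n : ℕ} (f : ℝ → EuclideanSpace ℝ (Fin n))
    (hf : ContDiff ℝ 1 f) (hunit : ∀ s, ‖deriv f s‖ = 1) (s₁ s₂ : ℝ) :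
    (s₁ - s₂) ^ 2 - ‖f s₁ - f s₂‖ ^ 2 =
      (1 / 2) * ∫ s₃ in s₂..s₁, ∫ s₄ in s₂..s₁, ‖deriv f s₃ - deriv f s₄‖ ^ 2 := by
  set τ := deriv f with hτ
  have hcont : Continuous τ := (hf.continuous_deriv le_rfl)
  have hdiff : Differentiable ℝ f := hf.differentiable one_ne_zero
  have hFTC : f s₁ - f s₂ = ∫ t in s₂..s₁, τ t := by
    rw [intervalIntegral.integral_deriv_eq_sub (fun x _ => hdiff x)
      (hcont.intervalIntegrable _ _)]
  have hin : ∀ c : EuclideanSpace ℝ (Fin n),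
      (inner ℝ c (f s₁ - f s₂) : ℝ) = ∫ t in s₂..s₁, (inner ℝ c (τ t) : ℝ) := by
    intro c
    rw [hFTC]
    exact ((innerSL ℝ c).intervalIntegral_comp_comm
      (hcont.intervalIntegrable _ _)).symm
  have key : ∀ s₃ s₄, ‖τ s₃ - τ s₄‖ ^ 2 = 2 - 2 * (inner ℝ (τ s₃) (τ s₄) : ℝ) := by
    intro s₃ s₄
    rw [norm_sub_sq_real, hunit, hunit]; ring
  have hinner : ∫ s₃ in s₂..s₁, ∫ s₄ in s₂..s₁, ‖τ s₃ - τ s₄‖ ^ 2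
      = ∫ s₃ in s₂..s₁, (2 * (s₁ - s₂) - 2 * (inner ℝ (τ s₃) (f s₁ - f s₂) : ℝ)) := by
    refine intervalIntegral.integral_congr fun s₃ _ => ?_
    simp only [key]
    rw [intervalIntegral.integral_sub (intervalIntegrable_const)
      (((continuous_const.inner hcont).intervalIntegrable _ _).const_mul 2),
      intervalIntegral.integral_const,
      intervalIntegral.integral_const_mul, ← hin]
    simp only [smul_eq_mul]
    ring
  rw [hinner, intervalIntegral.integral_sub intervalIntegrable_const
      (((hcont.inner continuous_const).intervalIntegrable _ _).const_mul 2),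
    intervalIntegral.integral_const, intervalIntegral.integral_const_mul]
  have : ∫ s₃ in s₂..s₁, (inner ℝ (τ s₃) (f s₁ - f s₂) : ℝ) = ‖f s₁ - f s₂‖ ^ 2 := by
    have : ∀ s₃, (inner ℝ (τ s₃) (f s₁ - f s₂) : ℝ) = inner ℝ (f s₁ - f s₂) (τ s₃) := fun s₃ =>
      real_inner_comm _ _
    simp only [this]
    rw [← hin, real_inner_self_eq_norm_sq]
  rw [this]
  simp only [smul_eq_mul]
  ring
end

section
/- If u, v : ℝ → ℝ^d are continuously differentiable, then lim_{(s₁,s₂)→(s,s), s₁≠s₂} (1/(s₁-s₂)⁴) ∫_{s₂}^{s₁}∫_{s₂}^{s₁}∫_{s₄}^{s₃}∫_{s₄}^{s₃} u'(s₅)·v'(s₆) ds₅ ds₆ ds₃ ds₄ = (1/6) u'(s)·v'(s). -/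
open Real Filter intervalIntegral
open scoped RealInnerProductSpace Topology

variable {E : Type*} [NormedAddCommGroup E] [InnerProductSpace ℝ E] [CompleteSpace E]

lemma ftc_aux {f : ℝ → E} (hf : ContDiff ℝ 1 f) (a b : ℝ) :
    ∫ t in a..b, deriv f t = f b - f a :=
  intervalIntegral.integral_deriv_eq_sub
    (fun x _ => (hf.differentiable one_ne_zero).differentiableAt)
    ((hf.continuous_deriv le_rfl).intervalIntegrable a b)

lemma reduce_aux {u v : ℝ → E} (hu : ContDiff ℝ 1 u) (hv : ContDiff ℝ 1 v) (s₃ s₄ : ℝ) :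
    (∫ s₅ in s₄..s₃, ∫ s₆ in s₄..s₃, ⟪deriv u s₅, deriv v s₆⟫) =
      ⟪u s₃ - u s₄, v s₃ - v s₄⟫ := by
  have h1 : ∀ s₅ : ℝ, (∫ s₆ in s₄..s₃, ⟪deriv u s₅, deriv v s₆⟫)
      = ⟪deriv u s₅, v s₃ - v s₄⟫ := by
    intro s₅
    rw [← ftc_aux hv s₄ s₃]
    exact (innerSL ℝ (deriv u s₅)).intervalIntegral_comp_comm
      ((hv.continuous_deriv le_rfl).intervalIntegrable _ _)
  simp only [h1]
  rw [show (∫ s₅ in s₄..s₃, ⟪deriv u s₅, v s₃ - v s₄⟫)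
      = ∫ s₅ in s₄..s₃, ⟪v s₃ - v s₄, deriv u s₅⟫ from
    intervalIntegral.integral_congr fun x _ => real_inner_comm _ _]
  rw [real_inner_comm (v s₃ - v s₄) (u s₃ - u s₄), ← ftc_aux hu s₄ s₃]
  exact (innerSL ℝ (v s₃ - v s₄)).intervalIntegral_comp_comm
    ((hu.continuous_deriv le_rfl).intervalIntegrable _ _)

lemma poly_aux (a b : ℝ) :
    (∫ s₃ in a..b, ∫ s₄ in a..b, (s₃ - s₄)^2) = (b - a)^4 / 6 := by
  have h1 : ∀ s₃ : ℝ, (∫ s₄ in a..b, (s₃ - s₄)^2) = ((s₃-a)^3 - (s₃-b)^3)/3 := by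
    intro s₃
    rw [show (fun s₄ : ℝ => (s₃ - s₄)^2) = fun s₄ => (fun x => x^2) (s₃ - s₄) from rfl,
      intervalIntegral.integral_comp_sub_left (fun x => x^2) s₃, integral_pow]
    ring
  simp_rw [h1]
  rw [intervalIntegral.integral_div, intervalIntegral.integral_sub
    (by apply Continuous.intervalIntegrable; fun_prop)
    (by apply Continuous.intervalIntegrable; fun_prop)]
  rw [show (fun s₃ : ℝ => (s₃ - a)^3) = fun s₃ => (fun x => x^3) (s₃ - a) from rfl,
    show (fun s₃ : ℝ => (s₃ - b)^3) = fun s₃ => (fun x => x^3) (s₃ - b) from rfl,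
    intervalIntegral.integral_comp_sub_right (fun x => x^3) a,
    intervalIntegral.integral_comp_sub_right (fun x => x^3) b,
    integral_pow, integral_pow]
  ring

lemma deriv_approx {f : ℝ → E} (hf : ContDiff ℝ 1 f) {c ε : ℝ} {x y : ℝ}
    (h : ∀ t ∈ Set.uIcc y x, ‖deriv f t - deriv f c‖ ≤ ε) :
    ‖(f x - f y) - (x - y) • deriv f c‖ ≤ ε * |x - y| := by
  have heq : (f x - f y) - (x - y) • deriv f c = ∫ t in y..x, (deriv f t - deriv f c) := by
    rw [intervalIntegral.integral_sub ((hf.continuous_deriv le_rfl).intervalIntegrable _ _)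
      intervalIntegrable_const, ftc_aux hf, intervalIntegral.integral_const]
  rw [heq]
  exact intervalIntegral.norm_integral_le_of_norm_le_const
    (fun t ht => h t (Set.uIoc_subset_uIcc ht))

theorem quadruple_integral_limit {d : ℕ} (u v : ℝ → EuclideanSpace ℝ (Fin d))
    (hu : ContDiff ℝ 1 u) (hv : ContDiff ℝ 1 v) (s : ℝ) :
    Tendsto
      (fun p : ℝ × ℝ => (1 / (p.1 - p.2) ^ 4) *
        ∫ s₃ in p.2..p.1, ∫ s₄ in p.2..p.1, ∫ s₅ in s₄..s₃, ∫ s₆ in s₄..s₃,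
          ⟪deriv u s₅, deriv v s₆⟫)
      (𝓝[{p : ℝ × ℝ | p.1 ≠ p.2}] (s, s))
      (𝓝 ((1 / 6) * ⟪deriv u s, deriv v s⟫)) := by
  have hU : Continuous (deriv u) := hu.continuous_deriv le_rfl
  have hV : Continuous (deriv v) := hv.continuous_deriv le_rfl
  set A : ℝ := ⟪deriv u s, deriv v s⟫ with hA
  set g : ℝ → ℝ → ℝ := fun x y => ⟪u x - u y, v x - v y⟫ with hg
  have hucont : Continuous u := hu.continuous
  have hvcont : Continuous v := hv.continuous
  have hgcont : Continuous (Function.uncurry g) :=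
    Continuous.inner ((hucont.comp continuous_fst).sub (hucont.comp continuous_snd))
      ((hvcont.comp continuous_fst).sub (hvcont.comp continuous_snd))
  rw [Metric.tendsto_nhdsWithin_nhds]
  intro ε hε
  set C : ℝ := ‖deriv u s‖ + ‖deriv v s‖ + 1 with hCdef
  have hC : 0 < C := by positivity
  set ε' : ℝ := min 1 (ε / (2 * C)) with hε'def
  have hε'pos : 0 < ε' := lt_min one_pos (by positivity)
  have hε'1 : ε' ≤ 1 := min_le_left _ _
  obtain ⟨δ, hδpos, hder⟩ : ∃ δ > 0, ∀ t : ℝ, |t - s| < δ →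
      ‖deriv u t - deriv u s‖ ≤ ε' ∧ ‖deriv v t - deriv v s‖ ≤ ε' := by
    obtain ⟨δ₁, hδ₁, H1⟩ := Metric.continuousAt_iff.mp (hU.continuousAt (x := s)) ε' hε'pos
    obtain ⟨δ₂, hδ₂, H2⟩ := Metric.continuousAt_iff.mp (hV.continuousAt (x := s)) ε' hε'pos
    refine ⟨min δ₁ δ₂, lt_min hδ₁ hδ₂, fun t ht => ⟨?_, ?_⟩⟩
    · have := H1 (show dist t s < δ₁ by
        rw [Real.dist_eq]; exact lt_of_lt_of_le ht (min_le_left _ _))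
      rw [dist_eq_norm] at this; exact this.le
    · have := H2 (show dist t s < δ₂ by
        rw [Real.dist_eq]; exact lt_of_lt_of_le ht (min_le_right _ _))
      rw [dist_eq_norm] at this; exact this.le
  refine ⟨δ, hδpos, ?_⟩
  rintro ⟨s₁, s₂⟩ hne hdist
  have hne' : s₁ ≠ s₂ := hne
  rw [Prod.dist_eq, max_lt_iff, Real.dist_eq, Real.dist_eq] at hdist
  obtain ⟨hd1, hd2⟩ := hdist
  have hDne : s₁ - s₂ ≠ 0 := sub_ne_zero.mpr hne'
  have hD4 : (0:ℝ) < (s₁ - s₂) ^ 4 := by positivity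
  -- points of uIcc s₂ s₁ are close to s
  have hmem : ∀ t ∈ Set.uIcc s₂ s₁, |t - s| < δ := by
    have hsub : Set.uIcc s₂ s₁ ⊆ Set.Ioo (s - δ) (s + δ) := by
      apply Set.ordConnected_Ioo.uIcc_subset
      · rw [abs_sub_lt_iff] at hd2
        exact Set.mem_Ioo.mpr ⟨by linarith [hd2.1, hd2.2], by linarith [hd2.1, hd2.2]⟩
      · rw [abs_sub_lt_iff] at hd1
        exact Set.mem_Ioo.mpr ⟨by linarith [hd1.1, hd1.2], by linarith [hd1.1, hd1.2]⟩
    intro t ht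
    have := hsub ht
    rw [Set.mem_Ioo] at this
    rw [abs_sub_lt_iff]
    constructor <;> linarith [this.1, this.2]
  -- pointwise estimate
  have key : ∀ x ∈ Set.uIcc s₂ s₁, ∀ y ∈ Set.uIcc s₂ s₁,
      |g x y - A * (x - y) ^ 2| ≤ ε' * C * (x - y) ^ 2 := by
    intro x hx y hy
    have hsub : Set.uIcc y x ⊆ Set.uIcc s₂ s₁ := Set.uIcc_subset_uIcc hy hx
    have hu1 : ‖(u x - u y) - (x - y) • deriv u s‖ ≤ ε' * |x - y| :=
      deriv_approx hu (fun t ht => (hder t (hmem t (hsub ht))).1)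
    have hv1 : ‖(v x - v y) - (x - y) • deriv v s‖ ≤ ε' * |x - y| :=
      deriv_approx hv (fun t ht => (hder t (hmem t (hsub ht))).2)
    have hvnorm : ‖v x - v y‖ ≤ (‖deriv v s‖ + ε') * |x - y| := by
      calc ‖v x - v y‖
          = ‖((v x - v y) - (x - y) • deriv v s) + (x - y) • deriv v s‖ := by
            rw [sub_add_cancel]
        _ ≤ ‖(v x - v y) - (x - y) • deriv v s‖ + ‖(x - y) • deriv v s‖ := norm_add_le _ _
        _ ≤ ε' * |x - y| + |x - y| * ‖deriv v s‖ := by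
            rw [norm_smul, Real.norm_eq_abs]; exact add_le_add hv1 le_rfl
        _ = (‖deriv v s‖ + ε') * |x - y| := by ring
    have hdecomp : g x y - A * (x - y) ^ 2
        = ⟪(u x - u y) - (x - y) • deriv u s, v x - v y⟫
          + ⟪(x - y) • deriv u s, (v x - v y) - (x - y) • deriv v s⟫ := by
      simp only [hg, hA, inner_sub_left, inner_sub_right, real_inner_smul_left,
        real_inner_smul_right]
      ring
    rw [hdecomp]
    have b1 : |⟪(u x - u y) - (x - y) • deriv u s, v x - v y⟫|
        ≤ (ε' * |x - y|) * ((‖deriv v s‖ + ε') * |x - y|) := by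
      calc _ ≤ ‖(u x - u y) - (x - y) • deriv u s‖ * ‖v x - v y‖ :=
            abs_real_inner_le_norm _ _
        _ ≤ _ := mul_le_mul hu1 hvnorm (norm_nonneg _) (by positivity)
    have b2 : |⟪(x - y) • deriv u s, (v x - v y) - (x - y) • deriv v s⟫|
        ≤ (|x - y| * ‖deriv u s‖) * (ε' * |x - y|) := by
      calc _ ≤ ‖(x - y) • deriv u s‖ * ‖(v x - v y) - (x - y) • deriv v s‖ :=
            abs_real_inner_le_norm _ _
        _ ≤ _ := by
            rw [norm_smul, Real.norm_eq_abs]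
            exact mul_le_mul le_rfl hv1 (norm_nonneg _) (by positivity)
    calc |_ + _| ≤ _ + _ := abs_add_le _ _
      _ ≤ (ε' * |x - y|) * ((‖deriv v s‖ + ε') * |x - y|)
          + (|x - y| * ‖deriv u s‖) * (ε' * |x - y|) := add_le_add b1 b2
      _ = ε' * (‖deriv u s‖ + ‖deriv v s‖ + ε') * |x - y| ^ 2 := by ring
      _ ≤ ε' * C * (x - y) ^ 2 := by
          rw [sq_abs]
          apply mul_le_mul_of_nonneg_right _ (sq_nonneg _)
          exact mul_le_mul_of_nonneg_left (by rw [hCdef]; linarith) hε'pos.le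
  -- continuity of parametric integrals
  have Fcont : Continuous fun x => ∫ t in s₂..s₁, g x t :=
    continuous_parametric_intervalIntegral_of_continuous' hgcont s₂ s₁
  have Qcont : Continuous fun x : ℝ => ∫ t in s₂..s₁, (x - t) ^ 2 :=
    continuous_parametric_intervalIntegral_of_continuous'
      (f := fun x t => (x - t) ^ 2) (by fun_prop) s₂ s₁
  have inner_eq : ∀ s₃ : ℝ, (∫ s₄ in s₂..s₁, (g s₃ s₄ - A * (s₃ - s₄) ^ 2))
      = (∫ s₄ in s₂..s₁, g s₃ s₄) - A * ∫ s₄ in s₂..s₁, (s₃ - s₄) ^ 2 := by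
    intro s₃
    have hgc : Continuous (g s₃) := hgcont.comp (Continuous.prodMk_right s₃)
    rw [intervalIntegral.integral_sub (hgc.intervalIntegrable _ _)
      ((by fun_prop : Continuous fun s₄ : ℝ => A * (s₃ - s₄) ^ 2).intervalIntegrable _ _),
      intervalIntegral.integral_const_mul]
  have big : (∫ s₃ in s₂..s₁, ∫ s₄ in s₂..s₁, g s₃ s₄) - A * ((s₁ - s₂) ^ 4 / 6)
      = ∫ s₃ in s₂..s₁, ∫ s₄ in s₂..s₁, (g s₃ s₄ - A * (s₃ - s₄) ^ 2) := by
    symm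
    calc ∫ s₃ in s₂..s₁, ∫ s₄ in s₂..s₁, (g s₃ s₄ - A * (s₃ - s₄) ^ 2)
        = ∫ s₃ in s₂..s₁,
            ((∫ s₄ in s₂..s₁, g s₃ s₄) - A * ∫ s₄ in s₂..s₁, (s₃ - s₄) ^ 2) :=
          intervalIntegral.integral_congr fun s₃ _ => inner_eq s₃
      _ = (∫ s₃ in s₂..s₁, ∫ s₄ in s₂..s₁, g s₃ s₄)
          - A * ∫ s₃ in s₂..s₁, ∫ s₄ in s₂..s₁, (s₃ - s₄) ^ 2 := by
          rw [intervalIntegral.integral_sub (Fcont.intervalIntegrable _ _)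
            ((show Continuous fun x => A * ∫ t in s₂..s₁, (x - t) ^ 2 from continuous_const.mul Qcont).intervalIntegrable _ _),
            intervalIntegral.integral_const_mul]
      _ = _ := by rw [poly_aux]
  have hDsq : ∀ x ∈ Set.uIcc s₂ s₁, ∀ y ∈ Set.uIcc s₂ s₁,
      (x - y) ^ 2 ≤ (s₁ - s₂) ^ 2 := by
    intro x hx y hy
    have h := Real.dist_le_of_mem_uIcc hx hy
    rw [Real.dist_eq, Real.dist_eq] at h
    calc (x - y) ^ 2 = |x - y| ^ 2 := (sq_abs _).symm
      _ ≤ |s₂ - s₁| ^ 2 := pow_le_pow_left₀ (abs_nonneg _) h 2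
      _ = (s₁ - s₂) ^ 2 := by rw [abs_sub_comm, sq_abs]
  have hbound : |∫ s₃ in s₂..s₁, ∫ s₄ in s₂..s₁, (g s₃ s₄ - A * (s₃ - s₄) ^ 2)|
      ≤ (ε' * C * (s₁ - s₂) ^ 2 * |s₁ - s₂|) * |s₁ - s₂| := by
    rw [← Real.norm_eq_abs]
    apply intervalIntegral.norm_integral_le_of_norm_le_const
    intro s₃ hs₃
    have hs₃' : s₃ ∈ Set.uIcc s₂ s₁ := Set.uIoc_subset_uIcc hs₃
    rw [Real.norm_eq_abs, ← Real.norm_eq_abs]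
    apply intervalIntegral.norm_integral_le_of_norm_le_const
    intro s₄ hs₄
    have hs₄' : s₄ ∈ Set.uIcc s₂ s₁ := Set.uIoc_subset_uIcc hs₄
    rw [Real.norm_eq_abs]
    calc |g s₃ s₄ - A * (s₃ - s₄) ^ 2| ≤ ε' * C * (s₃ - s₄) ^ 2 := key s₃ hs₃' s₄ hs₄'
      _ ≤ ε' * C * (s₁ - s₂) ^ 2 :=
          mul_le_mul_of_nonneg_left (hDsq _ hs₃' _ hs₄') (by positivity)
  have hbound2 : |(∫ s₃ in s₂..s₁, ∫ s₄ in s₂..s₁, g s₃ s₄) - A * ((s₁ - s₂) ^ 4 / 6)|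
      ≤ ε' * C * (s₁ - s₂) ^ 4 := by
    rw [big]
    refine hbound.trans (le_of_eq ?_)
    rw [show (ε' * C * (s₁ - s₂) ^ 2 * |s₁ - s₂|) * |s₁ - s₂|
        = ε' * C * (s₁ - s₂) ^ 2 * |s₁ - s₂| ^ 2 by ring, sq_abs]
    ring
  have step0 : (∫ s₃ in s₂..s₁, ∫ s₄ in s₂..s₁, ∫ s₅ in s₄..s₃, ∫ s₆ in s₄..s₃,
        ⟪deriv u s₅, deriv v s₆⟫) = ∫ s₃ in s₂..s₁, ∫ s₄ in s₂..s₁, g s₃ s₄ :=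
    intervalIntegral.integral_congr fun s₃ _ =>
      intervalIntegral.integral_congr fun s₄ _ => reduce_aux hu hv s₃ s₄
  show dist ((1 / (s₁ - s₂) ^ 4) * ∫ s₃ in s₂..s₁, ∫ s₄ in s₂..s₁,
      ∫ s₅ in s₄..s₃, ∫ s₆ in s₄..s₃, ⟪deriv u s₅, deriv v s₆⟫) (1 / 6 * A) < ε
  rw [step0, Real.dist_eq]
  have hsplit : (1 / (s₁ - s₂) ^ 4) * (∫ s₃ in s₂..s₁, ∫ s₄ in s₂..s₁, g s₃ s₄)
        - 1 / 6 * A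
      = (1 / (s₁ - s₂) ^ 4) *
        ((∫ s₃ in s₂..s₁, ∫ s₄ in s₂..s₁, g s₃ s₄) - A * ((s₁ - s₂) ^ 4 / 6)) := by
    field_simp
  rw [hsplit, abs_mul, abs_of_pos (show (0:ℝ) < 1 / (s₁ - s₂) ^ 4 by positivity)]
  calc (1 / (s₁ - s₂) ^ 4) *
        |(∫ s₃ in s₂..s₁, ∫ s₄ in s₂..s₁, g s₃ s₄) - A * ((s₁ - s₂) ^ 4 / 6)|
      ≤ (1 / (s₁ - s₂) ^ 4) * (ε' * C * (s₁ - s₂) ^ 4) :=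
        mul_le_mul_of_nonneg_left hbound2 (by positivity)
    _ = ε' * C := by field_simp
    _ ≤ (ε / (2 * C)) * C :=
        mul_le_mul_of_nonneg_right (min_le_right _ _) hC.le
    _ = ε / 2 := by field_simp
    _ < ε := by linarith
end
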